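/- arXiv:1609.00173 — 2 statements merged into one kernel-verified Lean document; each statement's English description precedes it below -/
import Mathlib

section
/- Diagonalization of the Szegedy reflection by a block-diagonal unitary: let U = Σ_{i=0}^{N−1} e_i e_i† ⊗ U_i, where each U_i is an N×N unitary matrix, and suppose there is a fixed b ∈ {0,…,N−1} such that U_i φ_i = e_b for all i. Then U(2Π − I)U† = I_N ⊗ (2 e_b e_b† − I_N). -/
open Matrix BigOperators

/-- The `i`-th column state of the transition matrix `P`: `(φ_i)_j = √(P_{j,i})`. -/
noncomputable def colState {N : ℕ} (P : Matrix (Fin N) (Fin N) ℝ) (i : Fin N) :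
    Fin N → ℂ :=
  fun j => (Real.sqrt (P j i) : ℂ)

/-- The `i`-th projector state `ψ_i = e_i ⊗ φ_i ∈ ℂ^N ⊗ ℂ^N`. -/
noncomputable def projState {N : ℕ} (P : Matrix (Fin N) (Fin N) ℝ) (i : Fin N) :
    Fin N × Fin N → ℂ :=
  fun p => (if p.1 = i then 1 else 0) * colState P i p.2

/-- The projection `Π = Σ_i ψ_i ψ_i†`, as a matrix on `ℂ^N ⊗ ℂ^N`. -/
noncomputable def szegedyProj {N : ℕ} (P : Matrix (Fin N) (Fin N) ℝ) :
    Matrix (Fin N × Fin N) (Fin N × Fin N) ℂ :=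
  ∑ i : Fin N,
    Matrix.of (fun p q => projState P i p * (starRingEnd ℂ) (projState P i q))

/-- The block-diagonal operator `U = Σ_i e_i e_i† ⊗ U_i` on `ℂ^N ⊗ ℂ^N`. -/
def blockDiag {N : ℕ} (Ui : Fin N → Matrix (Fin N) (Fin N) ℂ) :
    Matrix (Fin N × Fin N) (Fin N × Fin N) ℂ :=
  Matrix.of (fun p q => if p.1 = q.1 then Ui p.1 p.2 q.2 else 0)

/-- The diagonal operator `D = I_N ⊗ (2 e_b e_b† − I_N)` on `ℂ^N ⊗ ℂ^N`. -/
def diagD (N : ℕ) (b : Fin N) : Matrix (Fin N × Fin N) (Fin N × Fin N) ℂ :=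
  Matrix.of (fun p q =>
    (if p.1 = q.1 then 1 else 0) *
      (2 * (if p.2 = b then 1 else 0) * (if q.2 = b then 1 else 0) -
        (if p.2 = q.2 then 1 else 0)))

/- Auxiliary lemmas -/

lemma blockDiag_mul' {N : ℕ} (B C : Fin N → Matrix (Fin N) (Fin N) ℂ) :
    blockDiag B * blockDiag C = blockDiag (fun i => B i * C i) := by
  ext ⟨p1, p2⟩ ⟨q1, q2⟩
  simp only [Matrix.mul_apply, _root_.blockDiag, Matrix.of_apply, Fintype.sum_prod_type,
    ite_mul, zero_mul, mul_ite, mul_zero, Finset.sum_ite_eq, Finset.mem_univ, if_true]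
  by_cases h : p1 = q1
  · subst h; simp
  · simp [h]

lemma blockDiag_conjTranspose' {N : ℕ} (B : Fin N → Matrix (Fin N) (Fin N) ℂ) :
    (blockDiag B)ᴴ = blockDiag (fun i => (B i)ᴴ) := by
  ext ⟨p1, p2⟩ ⟨q1, q2⟩
  simp only [conjTranspose_apply, _root_.blockDiag, Matrix.of_apply]
  by_cases h : p1 = q1
  · subst h; simp
  · simp [h, Ne.symm h]

lemma blockDiag_one' {N : ℕ} :
    blockDiag (fun _ : Fin N => (1 : Matrix (Fin N) (Fin N) ℂ)) = 1 := by
  ext ⟨p1, p2⟩ ⟨q1, q2⟩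
  simp only [_root_.blockDiag, Matrix.of_apply, Matrix.one_apply, Prod.mk.injEq]
  by_cases h1 : p1 = q1 <;> by_cases h2 : p2 = q2 <;> simp [h1, h2]

lemma blockDiag_smul' {N : ℕ} (c : ℂ) (B : Fin N → Matrix (Fin N) (Fin N) ℂ) :
    c • blockDiag B = blockDiag (fun i => c • B i) := by
  ext ⟨p1, p2⟩ ⟨q1, q2⟩
  simp only [Matrix.smul_apply, _root_.blockDiag, Matrix.of_apply, smul_ite, smul_zero]

lemma blockDiag_sub' {N : ℕ} (B C : Fin N → Matrix (Fin N) (Fin N) ℂ) :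
    blockDiag B - blockDiag C = blockDiag (fun i => B i - C i) := by
  ext ⟨p1, p2⟩ ⟨q1, q2⟩
  simp only [Matrix.sub_apply, _root_.blockDiag, Matrix.of_apply]
  by_cases h : p1 = q1 <;> simp [h]

/-- The `i`-th block `φ_i φ_i†` of the Szegedy projector. -/
noncomputable def phiBlock {N : ℕ} (P : Matrix (Fin N) (Fin N) ℝ) (i : Fin N) :
    Matrix (Fin N) (Fin N) ℂ :=
  Matrix.of (fun a c => colState P i a * (starRingEnd ℂ) (colState P i c))

lemma szegedyProj_eq_blockDiag {N : ℕ} (P : Matrix (Fin N) (Fin N) ℝ) :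
    szegedyProj P = blockDiag (phiBlock P) := by
  ext ⟨p1, p2⟩ ⟨q1, q2⟩
  simp only [szegedyProj, Matrix.sum_apply, Matrix.of_apply, projState, _root_.blockDiag,
    phiBlock, _root_.map_mul, apply_ite (starRingEnd ℂ), _root_.map_one, _root_.map_zero]
  rw [Finset.sum_eq_single p1]
  · by_cases h : p1 = q1 <;> simp [h] <;> ring_nf <;> simp [Ne.symm h]
  · intro i _ hi; simp [Ne.symm hi]
  · simp

/-- The single block `2 e_b e_b† − I` of the diagonal operator. -/
def dBlock (N : ℕ) (b : Fin N) : Matrix (Fin N) (Fin N) ℂ :=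
  Matrix.of (fun a c =>
    2 * (if a = b then 1 else 0) * (if c = b then 1 else 0) - (if a = c then 1 else 0))

lemma diagD_eq_blockDiag (N : ℕ) (b : Fin N) :
    diagD N b = blockDiag (fun _ => dBlock N b) := by
  ext ⟨p1, p2⟩ ⟨q1, q2⟩
  simp only [diagD, Matrix.of_apply, _root_.blockDiag, dBlock]
  by_cases h : p1 = q1 <;> simp [h]

lemma perBlock {N : ℕ} (P : Matrix (Fin N) (Fin N) ℝ) (i : Fin N)
    (A : Matrix (Fin N) (Fin N) ℂ) (hA : A ∈ Matrix.unitaryGroup (Fin N) ℂ)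
    (b : Fin N) (hAb : A.mulVec (colState P i) = Pi.single b 1) :
    A * ((2 : ℂ) • phiBlock P i - 1) * Aᴴ = dBlock N b := by
  have hAA : A * Aᴴ = 1 := Matrix.mem_unitaryGroup_iff.mp hA
  have h1 : A * phiBlock P i =
      Matrix.of (fun a c => (if a = b then 1 else 0) * (starRingEnd ℂ) (colState P i c)) := by
    ext a c
    simp only [Matrix.mul_apply, phiBlock, Matrix.of_apply]
    have := congrFun hAb a
    simp only [Matrix.mulVec, dotProduct] at this
    rw [show ∑ k, A a k * (colState P i k * (starRingEnd ℂ) (colState P i c))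
        = (∑ k, A a k * colState P i k) * (starRingEnd ℂ) (colState P i c) by
      rw [Finset.sum_mul]; exact Finset.sum_congr rfl fun k _ => by ring]
    rw [this, Pi.single_apply]
  have h2 : A * phiBlock P i * Aᴴ =
      Matrix.of (fun a d => (if a = b then 1 else 0) * (if d = b then 1 else 0)) := by
    rw [h1]
    ext a d
    simp only [Matrix.mul_apply, Matrix.of_apply, conjTranspose_apply, ← starRingEnd_apply]
    rw [show ∑ c, (if a = b then (1:ℂ) else 0) * (starRingEnd ℂ) (colState P i c)
          * (starRingEnd ℂ) (A d c)
        = (if a = b then (1:ℂ) else 0) *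
          (starRingEnd ℂ) (∑ c, A d c * colState P i c) by
      rw [map_sum, Finset.mul_sum]; exact Finset.sum_congr rfl fun c _ => by
        rw [_root_.map_mul]; ring]
    have := congrFun hAb d
    simp only [Matrix.mulVec, dotProduct] at this
    rw [this, Pi.single_apply]
    by_cases hd : d = b <;> simp [hd]
  have expand : A * ((2 : ℂ) • phiBlock P i - 1) * Aᴴ
      = (2 : ℂ) • (A * phiBlock P i * Aᴴ) - A * Aᴴ := by
    rw [Matrix.mul_sub, Matrix.sub_mul, Matrix.mul_smul, Matrix.smul_mul, Matrix.mul_one]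
  rw [expand, h2, hAA]
  ext a d
  simp only [Matrix.sub_apply, Matrix.smul_apply, Matrix.of_apply, dBlock, Matrix.one_apply,
    smul_eq_mul]
  ring

/-- Diagonalization of the Szegedy reflection by a block-diagonal unitary:
if each `U_i` is unitary and `U_i φ_i = e_b` for a fixed basis index `b`, then
`U(2Π − I)U† = I_N ⊗ (2 e_b e_b† − I_N)`. -/
theorem szegedyReflection_diagonalization (N : ℕ) (hN : 1 ≤ N)
    (P : Matrix (Fin N) (Fin N) ℝ)
    (hnonneg : ∀ j i, 0 ≤ P j i) (hcol : ∀ i, ∑ j, P j i = 1)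
    (Ui : Fin N → Matrix (Fin N) (Fin N) ℂ)
    (hUi : ∀ i, Ui i ∈ Matrix.unitaryGroup (Fin N) ℂ)
    (b : Fin N)
    (hb : ∀ i, (Ui i).mulVec (colState P i) = Pi.single b 1) :
    blockDiag Ui * ((2 : ℂ) • szegedyProj P - 1) * (blockDiag Ui)ᴴ
      = diagD N b := by
  rw [szegedyProj_eq_blockDiag, blockDiag_smul', ← blockDiag_one', blockDiag_sub',
    blockDiag_mul', blockDiag_conjTranspose', blockDiag_mul', diagD_eq_blockDiag]
  exact congrArg _root_.blockDiag (funext fun i => perBlock P i (Ui i) (hUi i) b (hb i))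
end

section
/- Diagonalization of the Szegedy reflection for transition matrices whose column states are generated by powers of a fixed unitary: suppose there is an N×N unitary V such that φ_i = V^i φ_0 for all i ∈ {0,…,N−1} (e.g. V a cyclic rotation for a circulant transition matrix), and let K be an N×N unitary with K e_b = φ_0 for some b ∈ {0,…,N−1}. Then the block-diagonal operator U = Σ_{i=0}^{N−1} e_i e_i† ⊗ (K† (V†)^i) is unitary and satisfies U(2Π − I)U† = I_N ⊗ (2 e_b e_b† − I_N). -/
open Matrix BigOperators

/-- The block-diagonal operator `U = Σ_i e_i e_i† ⊗ (K† (V†)^i)` on `ℂ^N ⊗ ℂ^N`. -/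
noncomputable def powerBlockDiag {N : ℕ} (K V : Matrix (Fin N) (Fin N) ℂ) :
    Matrix (Fin N × Fin N) (Fin N × Fin N) ℂ :=
  Matrix.of (fun p q =>
    if p.1 = q.1 then (Kᴴ * (Vᴴ) ^ (p.1 : ℕ)) p.2 q.2 else 0)

namespace SzegedyAux

variable {N : ℕ}

/-- Block-diagonal matrix with block index in the first coordinate. -/
def bd (M : Fin N → Matrix (Fin N) (Fin N) ℂ) :
    Matrix (Fin N × Fin N) (Fin N × Fin N) ℂ :=
  Matrix.of fun p q => if p.1 = q.1 then M p.1 p.2 q.2 else 0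

lemma bd_mul (M M' : Fin N → Matrix (Fin N) (Fin N) ℂ) :
    bd M * bd M' = bd (fun i => M i * M' i) := by
  ext ⟨p1, p2⟩ ⟨q1, q2⟩
  simp only [bd, Matrix.mul_apply, Matrix.of_apply, Fintype.sum_prod_type,
    ite_mul, zero_mul, mul_ite, mul_zero]
  by_cases h : p1 = q1
  · subst h
    simp [Finset.sum_ite_eq]
  · simp [Finset.sum_ite_eq, h]

lemma bd_conjTranspose (M : Fin N → Matrix (Fin N) (Fin N) ℂ) :
    (bd M)ᴴ = bd (fun i => (M i)ᴴ) := by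
  ext p q
  simp only [bd, Matrix.conjTranspose_apply, Matrix.of_apply]
  split_ifs with h h' h'
  · rw [h]
  · exact absurd h.symm h'
  · exact absurd h'.symm h
  · simp

lemma bd_one : bd (fun _ : Fin N => (1 : Matrix (Fin N) (Fin N) ℂ)) = 1 := by
  ext p q
  simp only [bd, Matrix.of_apply, Matrix.one_apply, Prod.ext_iff]
  split_ifs with h h' h' <;> simp_all

lemma bd_smul_sub (M : Fin N → Matrix (Fin N) (Fin N) ℂ) (c : ℂ) :
    c • bd M - 1 = bd (fun i => c • M i - 1) := by
  rw [← bd_one]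
  ext p q
  simp only [bd, Matrix.sub_apply, Matrix.smul_apply, Matrix.of_apply]
  split_ifs <;> simp

lemma conj_vecMulVec (A : Matrix (Fin N) (Fin N) ℂ) (u : Fin N → ℂ) :
    A * Matrix.vecMulVec u (star u) * Aᴴ
      = Matrix.vecMulVec (A.mulVec u) (star (A.mulVec u)) := by
  ext a c
  simp only [Matrix.mul_apply, Matrix.vecMulVec_apply, Matrix.conjTranspose_apply,
    Matrix.mulVec, dotProduct, Pi.star_apply, star_sum, star_mul', star_star,
    Finset.sum_mul, Finset.mul_sum]
  apply Finset.sum_congr rfl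
  intro d _
  apply Finset.sum_congr rfl
  intro e _
  ring

end SzegedyAux

open SzegedyAux in
/-- Diagonalization of the Szegedy reflection for transition matrices whose column
states are generated by powers of a fixed unitary: if `φ_i = V^i φ_0` for all `i`
(`V` unitary) and `K` is a unitary with `K e_b = φ_0`, then the block-diagonal
operator `U = Σ_i e_i e_i† ⊗ (K† (V†)^i)` is unitary and
`U(2Π − I)U† = I_N ⊗ (2 e_b e_b† − I_N)`. -/

theorem szegedyReflection_diagonalization_of_unitary_powers (N : ℕ) [NeZero N]
    (P : Matrix (Fin N) (Fin N) ℝ)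
    (hnonneg : ∀ j i, 0 ≤ P j i) (hcol : ∀ i, ∑ j, P j i = 1)
    (V : Matrix (Fin N) (Fin N) ℂ) (hV : V ∈ Matrix.unitaryGroup (Fin N) ℂ)
    (hphi : ∀ i : Fin N, colState P i = (V ^ (i : ℕ)).mulVec (colState P 0))
    (K : Matrix (Fin N) (Fin N) ℂ) (hK : K ∈ Matrix.unitaryGroup (Fin N) ℂ)
    (b : Fin N) (hKb : K.mulVec (Pi.single b 1) = colState P 0) :
    powerBlockDiag K V ∈ Matrix.unitaryGroup (Fin N × Fin N) ℂ ∧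
    powerBlockDiag K V * ((2 : ℂ) • szegedyProj P - 1) * (powerBlockDiag K V)ᴴ
      = diagD N b := by
  have hA : ∀ i : Fin N, (Kᴴ * (Vᴴ) ^ (i : ℕ)) ∈ Matrix.unitaryGroup (Fin N) ℂ := by
    intro i
    rw [← Matrix.star_eq_conjTranspose, ← Matrix.star_eq_conjTranspose]
    exact mul_mem (Unitary.star_mem hK) (pow_mem (Unitary.star_mem hV) _)
  have hU : powerBlockDiag K V = bd (fun i => Kᴴ * (Vᴴ) ^ (i : ℕ)) := rfl
  have hAA : ∀ i : Fin N,
      (Kᴴ * (Vᴴ) ^ (i : ℕ)) * (Kᴴ * (Vᴴ) ^ (i : ℕ))ᴴ = 1 := by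
    intro i
    rw [← Matrix.star_eq_conjTranspose]
    exact Matrix.mem_unitaryGroup_iff.mp (hA i)
  have h1 : ∀ i : Fin N, (Vᴴ) ^ (i : ℕ) * V ^ (i : ℕ) = 1 := by
    intro i
    rw [← Matrix.conjTranspose_pow, ← Matrix.star_eq_conjTranspose]
    exact Matrix.mem_unitaryGroup_iff'.mp (pow_mem hV (i : ℕ))
  have h2 : Kᴴ * K = 1 := by
    rw [← Matrix.star_eq_conjTranspose]
    exact Matrix.mem_unitaryGroup_iff'.mp hK
  have key : ∀ i : Fin N,
      (Kᴴ * (Vᴴ) ^ (i : ℕ)).mulVec (colState P i) = Pi.single b 1 := by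
    intro i
    rw [hphi i, ← hKb, Matrix.mulVec_mulVec, Matrix.mulVec_mulVec]
    have hone : Kᴴ * (Vᴴ) ^ (i : ℕ) * V ^ (i : ℕ) * K = 1 := by
      rw [Matrix.mul_assoc Kᴴ ((Vᴴ) ^ (i : ℕ)) (V ^ (i : ℕ)), h1 i,
        Matrix.mul_one, h2]
    rw [hone, Matrix.one_mulVec]
  have hP : szegedyProj P
      = bd (fun i => Matrix.vecMulVec (colState P i) (star (colState P i))) := by
    ext ⟨p1, p2⟩ ⟨q1, q2⟩
    simp only [szegedyProj, Matrix.sum_apply, Matrix.of_apply, projState, bd,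
      Matrix.vecMulVec_apply, Pi.star_apply, _root_.map_mul, apply_ite (starRingEnd ℂ),
      _root_.map_one, _root_.map_zero, ite_mul, one_mul, zero_mul, mul_ite, mul_zero,
      starRingEnd_apply]
    by_cases h : p1 = q1
    · subst h
      simp [Finset.sum_ite_eq]
    · simp [Finset.sum_ite_eq, h]
  constructor
  · rw [Matrix.mem_unitaryGroup_iff, hU, Matrix.star_eq_conjTranspose,
      bd_conjTranspose, bd_mul, ← bd_one]
    exact congrArg bd (funext hAA)
  · have hblock : ∀ i : Fin N,
        (Kᴴ * (Vᴴ) ^ (i : ℕ)) *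
          ((2 : ℂ) • Matrix.vecMulVec (colState P i) (star (colState P i)) - 1) *
          (Kᴴ * (Vᴴ) ^ (i : ℕ))ᴴ
        = (2 : ℂ) • Matrix.vecMulVec (Pi.single b 1) (star (Pi.single b 1)) - 1 := by
      intro i
      rw [Matrix.mul_sub, Matrix.mul_one, Matrix.mul_smul, Matrix.sub_mul,
        Matrix.smul_mul, conj_vecMulVec, key i, hAA i]
    rw [hU, hP, bd_smul_sub, bd_mul, bd_conjTranspose, bd_mul]
    simp only [hblock]
    ext ⟨p1, p2⟩ ⟨q1, q2⟩
    simp only [bd, diagD, Matrix.of_apply, Matrix.sub_apply, Matrix.smul_apply,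
      Matrix.vecMulVec_apply, Matrix.one_apply, Pi.star_apply, Pi.single_apply,
      apply_ite (star : ℂ → ℂ), star_one, star_zero, smul_eq_mul]
    split_ifs <;> ring
end
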